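/- Let d be either the swap or the discrete isomorphic metric. For any two elections X and Y with m candidates and n = t·m! voters each, d(X,Y) ≤ d(ID, UN), where ID is the election with n identical votes and UN the election containing each of the m! possible votes exactly t times. -/

import Mathlib

set_option linter.unnecessarySeqFocus false


/-- Kendall tau (swap) distance between two votes over `Fin m`. -/
def kendallTau {m : ℕ} (σ τ : Equiv.Perm (Fin m)) : ℕ :=
  (Finset.univ.filter (fun p : Fin m × Fin m =>
    p.1 < p.2 ∧ ¬((σ p.1 < σ p.2) ↔ (τ p.1 < τ p.2)))).card

/-- Discrete distance between two votes: `0` if equal and `1` otherwise. -/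
def discDist {m : ℕ} (σ τ : Equiv.Perm (Fin m)) : ℕ :=
  if σ = τ then 0 else 1

/-- The isomorphic distance between two elections induced by a vote distance `dv`:
minimum over candidate bijections `π` and vote matchings `ρ` of the sum of distances
of matched votes. -/
noncomputable def elecDist {m n : ℕ}
    (dv : Equiv.Perm (Fin m) → Equiv.Perm (Fin m) → ℕ)
    (X Y : Fin n → Equiv.Perm (Fin m)) : ℕ :=
  sInf {d : ℕ | ∃ (π : Equiv.Perm (Fin m)) (ρ : Equiv.Perm (Fin n)),
    d = ∑ i, dv (π.symm.trans (X i)) (Y (ρ i))}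

lemma kendallTau_symm {m : ℕ} (σ τ : Equiv.Perm (Fin m)) :
    kendallTau σ τ = kendallTau τ σ := by
  unfold kendallTau
  congr 1
  apply Finset.filter_congr
  intro p _
  constructor <;> rintro ⟨h1, h2⟩ <;> exact ⟨h1, fun h => h2 h.symm⟩

lemma discDist_symm {m : ℕ} (σ τ : Equiv.Perm (Fin m)) :
    discDist σ τ = discDist τ σ := by
  unfold discDist
  simp [eq_comm]

lemma flip_cond {k : ℕ} (a b c d : Fin k) (hab : a ≠ b) (hcd : c ≠ d) :
    (¬(a < b ↔ c < d)) ↔ (¬(b < a ↔ d < c)) := by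
  rcases hab.lt_or_gt with h | h <;> rcases hcd.lt_or_gt with h' | h' <;>
    simp [h, h', lt_asymm h, lt_asymm h']

lemma kendallTau_mul_right {m : ℕ} (σ τ ρ : Equiv.Perm (Fin m)) :
    kendallTau (σ * ρ) (τ * ρ) = kendallTau σ τ := by
  unfold kendallTau
  apply Finset.card_bij'
    (i := fun p _ => if ρ p.1 < ρ p.2 then (ρ p.1, ρ p.2) else (ρ p.2, ρ p.1))
    (j := fun q _ => if ρ⁻¹ q.1 < ρ⁻¹ q.2 then (ρ⁻¹ q.1, ρ⁻¹ q.2) else (ρ⁻¹ q.2, ρ⁻¹ q.1))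
  · intro p hp
    rw [Finset.mem_filter] at hp ⊢
    simp only [Finset.mem_filter, Finset.mem_univ, true_and,
      Equiv.Perm.mul_apply] at hp ⊢
    obtain ⟨h1, h2⟩ := hp
    have hne : ρ p.1 ≠ ρ p.2 := fun h => h1.ne (ρ.injective h)
    split_ifs with h
    · exact ⟨h, h2⟩
    · refine ⟨hne.lt_or_gt.resolve_left h, ?_⟩
      exact (flip_cond _ _ _ _ (fun h' => hne (σ.injective h'))
        (fun h' => hne (τ.injective h'))).mp h2
  · intro q hq
    rw [Finset.mem_filter] at hq ⊢
    simp only [Finset.mem_filter, Finset.mem_univ, true_and,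
      Equiv.Perm.mul_apply] at hq ⊢
    obtain ⟨h1, h2⟩ := hq
    have hne : ρ⁻¹ q.1 ≠ ρ⁻¹ q.2 := fun h => h1.ne (ρ⁻¹.injective h)
    split_ifs with h
    · constructor
      · exact h
      · simpa using h2
    · refine ⟨hne.lt_or_gt.resolve_left h, ?_⟩
      have h2' : ¬((σ (ρ (ρ⁻¹ q.1)) < σ (ρ (ρ⁻¹ q.2))) ↔
          (τ (ρ (ρ⁻¹ q.1)) < τ (ρ (ρ⁻¹ q.2)))) := by simpa using h2
      have hne' : ρ (ρ⁻¹ q.2) ≠ ρ (ρ⁻¹ q.1) := by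
        simp only [Equiv.Perm.coe_inv, Equiv.apply_symm_apply]; exact h1.ne'
      exact (flip_cond _ _ _ _ (fun h' => hne' (σ.injective h').symm
        ) (fun h' => hne' (τ.injective h').symm)).mp h2'
  · intro p hp
    simp only [Finset.mem_filter, Finset.mem_univ, true_and] at hp
    obtain ⟨h1, _⟩ := hp
    split_ifs with h h' h' <;> simp_all <;> omega
  · intro q hq
    simp only [Finset.mem_filter, Finset.mem_univ, true_and] at hq
    obtain ⟨h1, _⟩ := hq
    split_ifs with h h' h' <;> simp_all <;> omega

lemma discDist_mul_right {m : ℕ} (σ τ ρ : Equiv.Perm (Fin m)) :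
    discDist (σ * ρ) (τ * ρ) = discDist σ τ := by
  unfold discDist
  simp [mul_left_inj]

/-- Let `d` be the swap or the discrete isomorphic metric. For any two elections `X`, `Y`
with `m` candidates and `n = t·m!` voters each, `d(X,Y) ≤ d(ID,UN)`, where `ID` consists of
`n` identical votes and `UN` contains each of the `m!` possible votes exactly `t` times. -/
theorem stmt2 (m n t : ℕ) (hn : n = t * Nat.factorial m)
    (dv : Equiv.Perm (Fin m) → Equiv.Perm (Fin m) → ℕ)
    (hdv : dv = kendallTau ∨ dv = discDist)
    (X Y : Fin n → Equiv.Perm (Fin m))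
    (U : Fin n → Equiv.Perm (Fin m))
    (hU : ∀ w : Equiv.Perm (Fin m), (Finset.univ.filter (fun i => U i = w)).card = t) :
    elecDist dv X Y ≤ elecDist dv (fun _ => (1 : Equiv.Perm (Fin m))) U := by
  obtain ⟨hsymm, hinv⟩ : (∀ a b, dv a b = dv b a) ∧
      (∀ a b c, dv (a * c) (b * c) = dv a b) := by
    rcases hdv with h | h <;> subst h
    · exact ⟨kendallTau_symm, fun a b c => kendallTau_mul_right a b c⟩
    · exact ⟨discDist_symm, fun a b c => discDist_mul_right a b c⟩
  set S : ℕ := ∑ w : Equiv.Perm (Fin m), dv 1 w with hS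
  have hA : ∀ σ : Equiv.Perm (Fin m), (∑ w : Equiv.Perm (Fin m), dv σ w) = S := by
    intro σ
    rw [hS]
    refine (Fintype.sum_equiv (Equiv.mulRight σ) _ _ fun w => ?_).symm
    simp only [Equiv.coe_mulRight]
    rw [← hinv 1 w σ, one_mul]
  have hB : ∀ τ : Equiv.Perm (Fin m), (∑ σ : Equiv.Perm (Fin m), dv σ τ) = S := by
    intro τ
    calc ∑ σ : Equiv.Perm (Fin m), dv σ τ = ∑ σ : Equiv.Perm (Fin m), dv τ σ :=
      Finset.sum_congr rfl fun σ _ => hsymm σ τ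
    _ = S := hA τ
  -- Step 1: every element of the ID/UN set equals t * S
  have h1 : t * S ≤ elecDist dv (fun _ => (1 : Equiv.Perm (Fin m))) U := by
    unfold elecDist
    have hmem0 : (∑ i, dv ((1 : Equiv.Perm (Fin m)).symm.trans 1) (U i)) ∈
        {d : ℕ | ∃ (π : Equiv.Perm (Fin m)) (ρ : Equiv.Perm (Fin n)),
          d = ∑ i, dv (π.symm.trans ((fun _ => (1 : Equiv.Perm (Fin m))) i)) (U (ρ i))} :=
      ⟨1, 1, by simp⟩
    apply le_csInf ⟨_, hmem0⟩
    rintro d ⟨π, ρ, rfl⟩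
    set a := π.symm.trans (1 : Equiv.Perm (Fin m)) with ha
    have e1 : (∑ i, dv a (U (ρ i))) = ∑ i, dv a (U i) :=
      Equiv.sum_comp ρ (fun i => dv a (U i))
    have e2 : (∑ i, dv a (U i)) = ∑ w : Equiv.Perm (Fin m),
        ∑ i ∈ Finset.univ.filter (fun i => U i = w), dv a w := by
      rw [Finset.sum_fiberwise' Finset.univ U (fun w => dv a w)]
    have e3 : (∑ w : Equiv.Perm (Fin m),
        ∑ i ∈ Finset.univ.filter (fun i => U i = w), dv a w) = t * S := by
      have : ∀ w : Equiv.Perm (Fin m),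
          (∑ i ∈ Finset.univ.filter (fun i => U i = w), dv a w) = t * dv a w := by
        intro w
        rw [Finset.sum_const, hU w, smul_eq_mul]
      rw [Finset.sum_congr rfl fun w _ => this w, ← Finset.mul_sum, hA a]
    exact le_of_eq (e1.trans (e2.trans e3)).symm
  -- Step 2: averaging over all candidate bijections
  have hsum : (∑ π : Equiv.Perm (Fin m), ∑ i, dv (π.symm.trans (X i)) (Y i)) =
      (Nat.factorial m) * (t * S) := by
    rw [Finset.sum_comm]
    have key : ∀ i, (∑ π : Equiv.Perm (Fin m), dv (π.symm.trans (X i)) (Y i)) = S := by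
      intro i
      have e : ∀ π : Equiv.Perm (Fin m), π.symm.trans (X i) = X i * π⁻¹ := by
        intro π
        rfl
      calc (∑ π : Equiv.Perm (Fin m), dv (π.symm.trans (X i)) (Y i))
          = ∑ σ : Equiv.Perm (Fin m), dv σ (Y i) := by
            refine Fintype.sum_equiv
              ((Equiv.inv (Equiv.Perm (Fin m))).trans (Equiv.mulLeft (X i))) _ _ fun π => ?_
            simp only [Equiv.trans_apply, Equiv.inv_apply, Equiv.coe_mulLeft]
            rw [e π]
        _ = S := hB (Y i)
    rw [Finset.sum_congr rfl fun i _ => key i, Finset.sum_const, Finset.card_univ,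
      Fintype.card_fin, hn, smul_eq_mul]
    ring
  have hne : (Finset.univ : Finset (Equiv.Perm (Fin m))).Nonempty := Finset.univ_nonempty
  obtain ⟨π, _, hπ⟩ := Finset.exists_le_of_sum_le hne (f := fun π =>
      ∑ i, dv (π.symm.trans (X i)) (Y i)) (g := fun _ => t * S) (by
    rw [hsum, Finset.sum_const, Finset.card_univ, Fintype.card_perm, Fintype.card_fin,
      smul_eq_mul])
  calc elecDist dv X Y ≤ ∑ i, dv (π.symm.trans (X i)) (Y i) := by
        unfold elecDist
        exact Nat.sInf_le ⟨π, 1, by simp⟩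
    _ ≤ t * S := hπ
    _ ≤ _ := h1
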